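/- arXiv:2201.07671 — 14 statements merged into one kernel-verified Lean document; each statement's English description precedes it below -/
import Mathlib

section
/- Let V be a real normed linear space. Define V' = V × ℝ with positive cone C = {(v, α) : ‖v‖ ≤ α}. Then C is a proper, generating, Archimedean cone, e = (0,1) is an order unit, and the associated order unit norm satisfies ‖(v, α)‖_e = ‖v‖ + |α| for all (v, α) ∈ V'. -/
/-- The cone obtained by adjoining an order unit to a normed space. -/
def dayCone (V : Type*) [NormedAddCommGroup V] : Set (V × ℝ) :=
  {p | ‖p.1‖ ≤ p.2}

lemma mem_dayCone {V : Type*} [NormedAddCommGroup V] (p : V × ℝ) :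
    p ∈ dayCone V ↔ ‖p.1‖ ≤ p.2 := Iff.rfl

/-- M. M. Day's construction: `V × ℝ` with cone `{(v, α) : ‖v‖ ≤ α}` is a proper,
generating, Archimedean cone, `e = (0,1)` is an order unit, and the order unit norm
is `‖(v, α)‖ₑ = ‖v‖ + |α|`. -/
theorem stmt0 {V : Type*} [NormedAddCommGroup V] [NormedSpace ℝ V] :
    (∀ x ∈ dayCone V, ∀ y ∈ dayCone V, x + y ∈ dayCone V) ∧
    (∀ x ∈ dayCone V, ∀ r : ℝ, 0 ≤ r → r • x ∈ dayCone V) ∧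
    (dayCone V ∩ (-(dayCone V)) = {0}) ∧
    (∀ x : V × ℝ, ∃ a ∈ dayCone V, ∃ b ∈ dayCone V, x = a - b) ∧
    (∀ x : V × ℝ, (∀ r : ℝ, 0 < r → x + r • ((0, 1) : V × ℝ) ∈ dayCone V) →
      x ∈ dayCone V) ∧
    (∀ x : V × ℝ, ∃ r : ℝ, 0 < r ∧ r • ((0, 1) : V × ℝ) - x ∈ dayCone V) ∧
    (∀ p : V × ℝ,
      sInf {r : ℝ | 0 < r ∧ r • ((0, 1) : V × ℝ) - p ∈ dayCone V ∧
        r • ((0, 1) : V × ℝ) + p ∈ dayCone V} = ‖p.1‖ + |p.2|) := by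
  refine ⟨?_, ?_, ?_, ?_, ?_, ?_, ?_⟩
  · intro x hx y hy
    simp only [mem_dayCone, Prod.fst_add, Prod.snd_add] at *
    exact (norm_add_le _ _).trans (add_le_add hx hy)
  · intro x hx r hr
    simp only [mem_dayCone, Prod.smul_fst, Prod.smul_snd, norm_smul, Real.norm_eq_abs,
      abs_of_nonneg hr, smul_eq_mul] at *
    exact mul_le_mul_of_nonneg_left hx hr
  · ext x
    simp only [Set.mem_inter_iff, Set.mem_neg, mem_dayCone, Prod.fst_neg, Prod.snd_neg,
      norm_neg, Set.mem_singleton_iff]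
    constructor
    · rintro ⟨h1, h2⟩
      have h2' : x.2 ≤ -‖x.1‖ := le_neg.mp (by linarith [h2])
      have hx2 : x.2 = 0 := le_antisymm (h2'.trans (neg_nonpos.mpr (norm_nonneg _))) ((norm_nonneg _).trans h1)
      have hx1 : ‖x.1‖ = 0 := le_antisymm (hx2 ▸ h1) (norm_nonneg _)
      exact Prod.ext (norm_eq_zero.mp hx1) hx2
    · rintro rfl; simp
  · intro x
    refine ⟨(x.1, ‖x.1‖ + |x.2|), ?_, (0, ‖x.1‖ + |x.2| - x.2), ?_, ?_⟩
    · simp [mem_dayCone, abs_nonneg]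
    · simp only [mem_dayCone, norm_zero]
      have := abs_nonneg x.2
      have := le_abs_self x.2
      have := norm_nonneg x.1
      linarith
    · ext <;> simp
  · intro x hx
    simp only [mem_dayCone, Prod.fst_add, Prod.snd_add, Prod.smul_fst, Prod.smul_snd,
      smul_zero, smul_eq_mul, mul_one, add_zero] at *
    refine le_of_forall_pos_le_add fun r hr => ?_
    exact hx r hr
  · intro x
    refine ⟨‖x.1‖ + |x.2| + 1, by positivity, ?_⟩
    simp only [mem_dayCone, Prod.fst_sub, Prod.snd_sub, Prod.smul_fst, Prod.smul_snd,
      smul_zero, smul_eq_mul, mul_one, zero_sub, norm_neg]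
    have := le_abs_self x.2
    linarith
  · intro p
    have hset : {r : ℝ | 0 < r ∧ r • ((0, 1) : V × ℝ) - p ∈ dayCone V ∧
        r • ((0, 1) : V × ℝ) + p ∈ dayCone V} =
        {r : ℝ | 0 < r ∧ ‖p.1‖ + |p.2| ≤ r} := by
      ext r
      simp only [Set.mem_setOf_eq, mem_dayCone, Prod.fst_sub, Prod.snd_sub, Prod.fst_add,
        Prod.snd_add, Prod.smul_fst, Prod.smul_snd, smul_zero, smul_eq_mul, mul_one,
        zero_sub, norm_neg, zero_add]
      constructor
      · rintro ⟨h0, h1, h2⟩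
        refine ⟨h0, ?_⟩
        rcases abs_cases p.2 with ⟨he, _⟩ | ⟨he, _⟩ <;> rw [he] <;> linarith
      · rintro ⟨h0, h⟩
        have h1 := le_abs_self p.2
        have h2 := neg_abs_le p.2
        exact ⟨h0, by linarith, by linarith⟩
    rw [hset]
    rcases eq_or_lt_of_le (by positivity : (0:ℝ) ≤ ‖p.1‖ + |p.2|) with h | h
    · have : {r : ℝ | 0 < r ∧ ‖p.1‖ + |p.2| ≤ r} = Set.Ioi 0 := by
        ext r; simp [← h, and_iff_left_iff_imp]; intro hr; linarith
      rw [this, csInf_Ioi, ← h]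
    · have : {r : ℝ | 0 < r ∧ ‖p.1‖ + |p.2| ≤ r} = Set.Ici (‖p.1‖ + |p.2|) := by
        ext r
        simp only [Set.mem_setOf_eq, Set.mem_Ici]
        exact ⟨fun ⟨_, h2⟩ => h2, fun h2 => ⟨lt_of_lt_of_le h h2, h2⟩⟩
      rw [this, csInf_Ici]
end

section
/- Let V be a real normed linear space and V' = V × ℝ ordered by the cone {(v, α) : ‖v‖ ≤ α}. Then B = {(v, 1) : ‖v‖ ≤ 1} is a base for the cone, and the convex hull of B ∪ (-B) equals {(x, α) : ‖x‖ ≤ 1, |α| ≤ 1}; consequently the associated base norm is ‖(v, α)‖_B = max{‖v‖, |α|}. -/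
/-- The set `B = {(v, 1) : ‖v‖ ≤ 1}`. -/
def dayBase (V : Type*) [NormedAddCommGroup V] : Set (V × ℝ) :=
  {p | ‖p.1‖ ≤ 1 ∧ p.2 = 1}

theorem dayHull {V : Type*} [NormedAddCommGroup V] [NormedSpace ℝ V] :
    convexHull ℝ (dayBase V ∪ -(dayBase V)) =
      {p : V × ℝ | ‖p.1‖ ≤ 1 ∧ |p.2| ≤ 1} := by
  apply subset_antisymm
  · have hconv : Convex ℝ {p : V × ℝ | ‖p.1‖ ≤ 1 ∧ |p.2| ≤ 1} := by
      have : {p : V × ℝ | ‖p.1‖ ≤ 1 ∧ |p.2| ≤ 1} = Metric.closedBall (0 : V × ℝ) 1 := by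
        ext p
        simp [Prod.norm_def, Real.norm_eq_abs, max_le_iff]
      rw [this]
      exact convex_closedBall 0 1
    apply convexHull_min _ hconv
    rintro p (⟨h1, h2⟩ | hp)
    · exact ⟨h1, by rw [h2]; norm_num⟩
    · rw [Set.mem_neg] at hp
      obtain ⟨h1, h2⟩ := hp
      refine ⟨by simpa using h1, ?_⟩
      have : p.2 = -1 := by
        have := h2; simp only [Prod.fst_neg, Prod.snd_neg] at this ⊢; linarith
      rw [this]; norm_num
  · rintro ⟨x, α⟩ ⟨hx, hα⟩
    have hb : ((x, 1) : V × ℝ) ∈ dayBase V ∪ -(dayBase V) := Or.inl ⟨hx, rfl⟩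
    have hc : ((x, -1) : V × ℝ) ∈ dayBase V ∪ -(dayBase V) := by
      refine Or.inr ?_
      rw [Set.mem_neg]
      exact ⟨by simpa using hx, by simp⟩
    have hbb := subset_convexHull ℝ _ hb
    have hcc := subset_convexHull ℝ _ hc
    have ht0 : (0:ℝ) ≤ (1 + α) / 2 := by
      rw [abs_le] at hα; linarith [hα.1]
    have ht1 : (0:ℝ) ≤ (1 - α) / 2 := by
      rw [abs_le] at hα; linarith [hα.2]
    have := (convex_convexHull ℝ (dayBase V ∪ -(dayBase V))) hbb hcc ht0 ht1 (by ring)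
    convert this using 1
    ext
    · simp only [Prod.fst_add, Prod.smul_def, smul_smul]
      module
    · simp [Prod.smul_def]
      ring

/-- `B = {(v,1) : ‖v‖ ≤ 1}` is a base for the cone `{(v, α) : ‖v‖ ≤ α}`, the convex
hull of `B ∪ -B` is `{(x, α) : ‖x‖ ≤ 1, |α| ≤ 1}`, and the associated base norm
(Minkowski functional of `conv (B ∪ -B)`) is `max ‖v‖ |α|`. -/
theorem stmt1 {V : Type*} [NormedAddCommGroup V] [NormedSpace ℝ V] :
    Convex ℝ (dayBase V) ∧
    (∀ x ∈ dayCone V, x ≠ 0 →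
      ∃! p : ℝ × (V × ℝ), 0 < p.1 ∧ p.2 ∈ dayBase V ∧ x = p.1 • p.2) ∧
    (convexHull ℝ (dayBase V ∪ -(dayBase V)) =
      {p : V × ℝ | ‖p.1‖ ≤ 1 ∧ |p.2| ≤ 1}) ∧
    (∀ p : V × ℝ,
      gauge (convexHull ℝ (dayBase V ∪ -(dayBase V))) p = max ‖p.1‖ |p.2|) := by
  have hball : {p : V × ℝ | ‖p.1‖ ≤ 1 ∧ |p.2| ≤ 1} = Metric.closedBall (0 : V × ℝ) 1 := by
    ext p
    simp [Prod.norm_def, Real.norm_eq_abs, max_le_iff]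
  refine ⟨?_, ?_, dayHull, ?_⟩
  · rintro ⟨a, b⟩ ⟨ha1, ha2⟩ ⟨c, d⟩ ⟨hc1, hc2⟩ s t hs ht hst
    constructor
    · simp only [Prod.fst_add, Prod.smul_def]
      calc ‖s • a + t • c‖ ≤ ‖s • a‖ + ‖t • c‖ := norm_add_le _ _
        _ ≤ s * 1 + t * 1 := by
            rw [norm_smul, norm_smul, Real.norm_eq_abs, abs_of_nonneg hs,
              Real.norm_eq_abs, abs_of_nonneg ht]
            gcongr
        _ = 1 := by linarith
    · have hb : b = 1 := ha2
      have hd : d = 1 := hc2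
      simp only [Prod.snd_add, Prod.smul_def, smul_eq_mul, hb, hd]
      linarith
  · rintro ⟨v, α⟩ hx hne
    have hv : ‖v‖ ≤ α := hx
    have hα : 0 < α := by
      rcases lt_or_eq_of_le (le_trans (norm_nonneg v) hv) with h | h
      · exact h
      · exfalso
        apply hne
        have hv0 : v = 0 := by
          have : ‖v‖ ≤ 0 := h ▸ hv
          simpa [norm_le_zero_iff] using this
        simp [Prod.ext_iff, hv0, ← h]
    refine ⟨(α, (α⁻¹ • v, 1)), ⟨hα, ⟨?_, rfl⟩, ?_⟩, ?_⟩
    · rw [norm_smul, Real.norm_eq_abs, abs_of_pos (inv_pos.2 hα)]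
      rw [inv_mul_le_iff₀ hα, mul_one]
      exact hv
    · simp [Prod.ext_iff, smul_smul, mul_inv_cancel₀ hα.ne']
    · rintro ⟨l, ⟨b, β⟩⟩ ⟨hl, ⟨hb1, hb2⟩, heq⟩
      simp only [Prod.smul_def, Prod.mk.injEq, smul_eq_mul] at heq
      obtain ⟨h1, h2⟩ := heq
      subst hb2
      have hlα : l = α := by simpa using h2.symm
      subst hlα
      have : b = l⁻¹ • v := by
        rw [h1, smul_smul, inv_mul_cancel₀ hl.ne', one_smul]
      simp [this]
  · intro p
    rw [dayHull, hball, gauge_closedBall zero_le_one, div_one, Prod.norm_def,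
      Real.norm_eq_abs]
end

section
/- Let C₀ be a nonempty, radially compact, absolutely convex subset of a real vector space X, and let X₀ = span(C₀) = ⋃ₙ nC₀. Then for each nonzero x ∈ X₀ there exist a unique lead point c of C₀ and a unique α > 0 such that x = αc. -/
/-- A set `S` is radially compact if for every nonzero `x`, `{α : ℝ | α • x ∈ S}` is
compact in `ℝ`. -/
def RadiallyCompact {X : Type*} [AddCommGroup X] [Module ℝ X] (S : Set X) : Prop :=
  ∀ x : X, x ≠ 0 → IsCompact {α : ℝ | α • x ∈ S}

/-- For a convex set `C` containing `0`, `x ∈ C` is a lead point of `C` if `x = λ • y`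
with `y ∈ C`, `λ ∈ [0,1]` implies `λ = 1` and `y = x`. -/
def LeadPoint {X : Type*} [AddCommGroup X] [Module ℝ X] (C : Set X) (x : X) : Prop :=
  x ∈ C ∧ ∀ y ∈ C, ∀ l : ℝ, l ∈ Set.Icc (0 : ℝ) 1 → x = l • y → l = 1 ∧ y = x

lemma absorb_aux {X : Type*} [AddCommGroup X] [Module ℝ X] (C₀ : Set X)
    (hconv : Convex ℝ C₀) (hbal : Balanced ℝ C₀) (h0 : (0 : X) ∈ C₀) :
    ∀ x ∈ Submodule.span ℝ C₀, ∃ t : ℝ, 0 < t ∧ t • x ∈ C₀ := by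
  intro x hx
  induction hx using Submodule.span_induction with
  | mem y hy => exact ⟨1, one_pos, by simpa using hy⟩
  | zero => exact ⟨1, one_pos, by simpa using h0⟩
  | add y z _ _ ihy ihz =>
    obtain ⟨t1, ht1, hm1⟩ := ihy
    obtain ⟨t2, ht2, hm2⟩ := ihz
    have hs : (0:ℝ) < t1⁻¹ + t2⁻¹ := by positivity
    refine ⟨(t1⁻¹ + t2⁻¹)⁻¹, by positivity, ?_⟩
    have key := hconv hm1 hm2 (a := (t1⁻¹ + t2⁻¹)⁻¹ * t1⁻¹)
      (b := (t1⁻¹ + t2⁻¹)⁻¹ * t2⁻¹) (by positivity) (by positivity)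
      (by field_simp)
    have : ((t1⁻¹ + t2⁻¹)⁻¹ * t1⁻¹) • t1 • y + ((t1⁻¹ + t2⁻¹)⁻¹ * t2⁻¹) • t2 • z
        = (t1⁻¹ + t2⁻¹)⁻¹ • (y + z) := by
      rw [smul_smul, smul_smul, smul_add]
      congr 1 <;> congr 1 <;> (field_simp)
    rwa [this] at key
  | smul a y _ ihy =>
    obtain ⟨t, ht, hm⟩ := ihy
    rcases eq_or_ne a 0 with rfl | ha
    · exact ⟨1, one_pos, by simpa using h0⟩
    · refine ⟨t * |a|⁻¹, by positivity, ?_⟩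
      have h1 : (t * |a|⁻¹) • a • y = (a / |a|) • t • y := by
        rw [smul_smul, smul_smul]; congr 1; field_simp
      rw [h1]
      exact hbal.smul_mem (by rw [Real.norm_eq_abs, abs_div, abs_abs,
        div_self (abs_ne_zero.mpr ha)]) hm

/-- Every nonzero element of the span of a nonempty, radially compact, absolutely
convex set `C₀` is uniquely `α • c` with `α > 0` and `c` a lead point of `C₀`. -/
theorem stmt2 {X : Type*} [AddCommGroup X] [Module ℝ X] (C₀ : Set X)
    (hne : C₀.Nonempty) (hrc : RadiallyCompact C₀)
    (hconv : Convex ℝ C₀) (hbal : Balanced ℝ C₀) :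
    ∀ x ∈ Submodule.span ℝ C₀, x ≠ 0 →
      ∃! p : ℝ × X, 0 < p.1 ∧ LeadPoint C₀ p.2 ∧ x = p.1 • p.2 := by
  intro x hxspan hx0
  obtain ⟨z, hz⟩ := hne
  have h0 : (0 : X) ∈ C₀ := by simpa using hbal.smul_mem (a := (0:ℝ)) (by simp) hz
  obtain ⟨t, ht, htm⟩ := absorb_aux C₀ hconv hbal h0 x hxspan
  set S : Set ℝ := {α : ℝ | α • x ∈ C₀} with hS
  have hScpt : IsCompact S := hrc x hx0
  have hSne : S.Nonempty := ⟨t, htm⟩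
  set m : ℝ := sSup S with hm
  have hmS : m ∈ S := hScpt.sSup_mem hSne
  have hle : ∀ β ∈ S, β ≤ m := fun β hβ => le_csSup hScpt.bddAbove hβ
  have hmpos : 0 < m := lt_of_lt_of_le ht (hle t htm)
  have hlead : LeadPoint C₀ (m • x) := by
    refine ⟨hmS, ?_⟩
    intro y hy l hl heq
    rcases eq_or_lt_of_le hl.2 with rfl | hl1
    · exact ⟨rfl, by simpa using heq.symm⟩
    rcases eq_or_lt_of_le hl.1 with rfl | hlpos
    · exfalso
      apply hx0
      have := heq
      simp only [zero_smul] at this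
      exact (smul_eq_zero.mp this).resolve_left (ne_of_gt hmpos)
    · exfalso
      have hy' : (l⁻¹ * m) • x ∈ C₀ := by
        have : y = l⁻¹ • (m • x) := by
          rw [heq, smul_smul, inv_mul_cancel₀ (ne_of_gt hlpos), one_smul]
        rw [← smul_smul, ← this]; exact hy
      have h1 : l⁻¹ * m ≤ m := hle _ hy'
      have h2 : m < l⁻¹ * m := by
        have hl' : (1:ℝ) < l⁻¹ := (one_lt_inv₀ hlpos).mpr hl1
        nlinarith
      exact absurd h1 (not_le.mpr h2)
  refine ⟨(m⁻¹, m • x), ⟨by positivity, hlead, by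
    rw [smul_smul, inv_mul_cancel₀ (ne_of_gt hmpos), one_smul]⟩, ?_⟩
  rintro ⟨α, c⟩ ⟨hα, hc, hxc⟩
  have hcS : α⁻¹ ∈ S := by
    have : c = α⁻¹ • x := by
      rw [hxc, smul_smul, inv_mul_cancel₀ (ne_of_gt hα), one_smul]
    simpa [hS, ← this] using hc.1
  have hαm : α⁻¹ ≤ m := hle _ hcS
  have hlam : (α * m)⁻¹ ∈ Set.Icc (0:ℝ) 1 := by
    constructor
    · positivity
    · rw [inv_le_one_iff₀]
      right
      calc (1:ℝ) = α * α⁻¹ := (mul_inv_cancel₀ (ne_of_gt hα)).symm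
        _ ≤ α * m := by nlinarith
  have hceq : c = (α * m)⁻¹ • (m • x) := by
    rw [smul_smul]
    have : (α * m)⁻¹ * m = α⁻¹ := by field_simp
    rw [this]
    rw [hxc, smul_smul, inv_mul_cancel₀ (ne_of_gt hα), one_smul]
  obtain ⟨hl1, hyc⟩ := hc.2 (m • x) hmS _ hlam hceq
  have hαval : α = m⁻¹ := by
    have : α * m = 1 := by
      have := hl1
      field_simp at this
      linarith [this]
    field_simp
    linarith [this]
  exact Prod.ext hαval hyc.symm
end

section
/- Let B be a nonempty convex set in a real vector space X with a centre b₀, and suppose B₀ = B - b₀ is radially compact. Then B₀ is balanced and convex. -/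
/-- `b₀` is a centre of a convex set `B` if for each `b ∈ B` there is `b' ∈ B` with
`b₀ = (1/2) b + (1/2) b'`. -/
def IsCentre {V : Type*} [AddCommGroup V] [Module ℝ V] (B : Set V) (b₀ : V) : Prop :=
  b₀ ∈ B ∧ ∀ b ∈ B, ∃ b' ∈ B, b₀ = (1 / 2 : ℝ) • b + (1 / 2 : ℝ) • b'

/-- If `B` is a nonempty convex set with centre `b₀` and `B₀ = B - b₀` is radially
compact, then `B₀` is balanced and convex. -/
theorem stmt5 {X : Type*} [AddCommGroup X] [Module ℝ X] (B : Set X)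
    (hne : B.Nonempty) (hconv : Convex ℝ B) (b₀ : X) (hcentre : IsCentre B b₀)
    (hrc : RadiallyCompact ((fun b => b - b₀) '' B)) :
    Balanced ℝ ((fun b => b - b₀) '' B) ∧ Convex ℝ ((fun b => b - b₀) '' B) := by
  obtain ⟨hb₀, hc⟩ := hcentre
  set S := (fun b => b - b₀) '' B with hS
  have hzero : (0 : X) ∈ S := ⟨b₀, hb₀, by simp⟩
  have hconvS : Convex ℝ S := by
    have hfun : (fun b : X => b - b₀) = (fun b => -b₀ + b) := by
      funext b; rw [sub_eq_neg_add]
    rw [hS, hfun]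
    exact hconv.translate (-b₀)
  have hsym : ∀ x ∈ S, -x ∈ S := by
    rintro _ ⟨b, hb, rfl⟩
    obtain ⟨b', hb', heq⟩ := hc b hb
    refine ⟨b', hb', ?_⟩
    have h2 : (2 : ℝ) • b₀ = b + b' := by
      rw [heq]; module
    have h3 : b₀ + b₀ = b + b' := by rw [← two_smul ℝ b₀]; exact_mod_cast h2
    have : b' = b₀ + b₀ - b := by rw [eq_sub_iff_add_eq, add_comm]; exact h3.symm
    rw [this]; beta_reduce; abel
  constructor
  · intro a ha x hx
    obtain ⟨y, hy, rfl⟩ := hx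
    rcases le_or_gt 0 a with h0 | h0
    · have : a ∈ Set.Icc (0 : ℝ) 1 := ⟨h0, by simpa [abs_of_nonneg h0] using ha⟩
      exact hconvS.smul_mem_of_zero_mem hzero hy this
    · have hmem : -a ∈ Set.Icc (0 : ℝ) 1 := by
        constructor
        · linarith
        · have := ha; rw [Real.norm_eq_abs, abs_of_neg h0] at this; linarith
      have := hconvS.smul_mem_of_zero_mem hzero (hsym y hy) hmem
      simpa [smul_neg, neg_smul] using this
  · exact hconvS
end

section
/- Let B be a nonempty convex set in a real vector space with centre b₀ such that B₀ = B - b₀ is radially compact. Set K = {x + b₀ : x is a lead point of B₀}. Then for each b ∈ B with b ≠ b₀ there exist a unique pair b₁, b₂ ∈ K with (1/2)b₁ + (1/2)b₂ = b₀ and a unique α with 1/2 < α ≤ 1 such that b = αb₁ + (1-α)b₂. -/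
/-- Let `B` be a nonempty convex set with centre `b₀` such that `B₀ = B - b₀` is
radially compact, and let `K = {x + b₀ : x a lead point of B₀}`. Then each `b ∈ B`
with `b ≠ b₀` is uniquely `α b₁ + (1-α) b₂` with `b₁, b₂ ∈ K`,
`(1/2) b₁ + (1/2) b₂ = b₀` and `1/2 < α ≤ 1`. -/
theorem stmt6 {X : Type*} [AddCommGroup X] [Module ℝ X] (B : Set X)
    (hne : B.Nonempty) (hconv : Convex ℝ B) (b₀ : X) (hcentre : IsCentre B b₀)
    (hrc : RadiallyCompact ((fun b => b - b₀) '' B)) :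
    ∀ b ∈ B, b ≠ b₀ →
      ∃! t : X × X × ℝ,
        (∃ x, LeadPoint ((fun b => b - b₀) '' B) x ∧ t.1 = x + b₀) ∧
        (∃ x, LeadPoint ((fun b => b - b₀) '' B) x ∧ t.2.1 = x + b₀) ∧
        (1 / 2 : ℝ) • t.1 + (1 / 2 : ℝ) • t.2.1 = b₀ ∧
        1 / 2 < t.2.2 ∧ t.2.2 ≤ 1 ∧
        b = t.2.2 • t.1 + (1 - t.2.2) • t.2.1 := by
  intro b hb hbne
  set C : Set X := (fun b => b - b₀) '' B with hC
  have h0C : (0:X) ∈ C := ⟨b₀, hcentre.1, sub_self b₀⟩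
  have hneg : ∀ x ∈ C, -x ∈ C := by
    rintro x ⟨a, ha, rfl⟩
    obtain ⟨a', ha', hEq⟩ := hcentre.2 a ha
    exact ⟨a', ha', by linear_combination (norm := module) (-2:ℝ) • hEq⟩
  set v : X := b - b₀ with hv
  have hvC : v ∈ C := ⟨b, hb, rfl⟩
  have hv0 : v ≠ 0 := sub_ne_zero.mpr hbne
  set S : Set ℝ := {α : ℝ | α • v ∈ C} with hS
  have hScomp : IsCompact S := hrc v hv0
  have h1S : (1:ℝ) ∈ S := by show (1:ℝ) • v ∈ C; rw [one_smul]; exact hvC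
  have hSbdd : BddAbove S := hScomp.bddAbove
  set m : ℝ := sSup S with hm
  have hmS : m ∈ S := hScomp.sSup_mem ⟨1, h1S⟩
  have hm1 : (1:ℝ) ≤ m := le_csSup hSbdd h1S
  have hm0 : (0:ℝ) < m := lt_of_lt_of_le one_pos hm1
  have hm0' : m ≠ 0 := ne_of_gt hm0
  have hSneg : ∀ a ∈ S, -a ∈ S := by
    intro a ha
    show (-a) • v ∈ C
    rw [neg_smul]
    exact hneg _ ha
  have hminv : m⁻¹ ≤ 1 := by
    have h1 : (0:ℝ) < m⁻¹ := inv_pos.mpr hm0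
    nlinarith [mul_inv_cancel₀ hm0']
  have key : ∀ l : ℝ, 0 < l → l ≤ 1 → l⁻¹ * m ≤ m → l = 1 := by
    intro l hl0 hl1 hle
    have h2 : m ≤ l * m := by
      have h3 := mul_le_mul_of_nonneg_left hle (le_of_lt hl0)
      rwa [← mul_assoc, mul_inv_cancel₀ (ne_of_gt hl0), one_mul] at h3
    nlinarith
  have hmv0 : m • v ≠ 0 := smul_ne_zero hm0' hv0
  have hlead1 : LeadPoint C (m • v) := by
    refine ⟨hmS, ?_⟩
    intro y hy l hl heq
    have hl0 : 0 < l := by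
      rcases lt_or_eq_of_le hl.1 with h | h
      · exact h
      · exfalso; apply hmv0; rw [heq, ← h, zero_smul]
    have hy' : y = (l⁻¹ * m) • v := by
      rw [mul_smul, heq, smul_smul, inv_mul_cancel₀ (ne_of_gt hl0), one_smul]
    have hcS : l⁻¹ * m ∈ S := by show (l⁻¹ * m) • v ∈ C; rw [← hy']; exact hy
    have hl1 : l = 1 := key l hl0 hl.2 (le_csSup hSbdd hcS)
    refine ⟨hl1, ?_⟩
    rw [heq, hl1, one_smul]
  have hlead2 : LeadPoint C (-(m • v)) := by
    have hmem : -(m • v) ∈ C := hneg _ hmS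
    refine ⟨hmem, ?_⟩
    intro y hy l hl heq
    have hl0 : 0 < l := by
      rcases lt_or_eq_of_le hl.1 with h | h
      · exact h
      · exfalso; apply hmv0; rw [← neg_eq_zero, heq, ← h, zero_smul]
    have hy' : y = (l⁻¹ * (-m)) • v := by
      rw [mul_smul, neg_smul, heq, smul_smul, inv_mul_cancel₀ (ne_of_gt hl0), one_smul]
    have hcS : l⁻¹ * (-m) ∈ S := by show (l⁻¹ * (-m)) • v ∈ C; rw [← hy']; exact hy
    have hcS' : l⁻¹ * m ∈ S := by
      have := hSneg _ hcS
      rwa [mul_neg, neg_neg] at this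
    have hl1 : l = 1 := key l hl0 hl.2 (le_csSup hSbdd hcS')
    refine ⟨hl1, ?_⟩
    rw [heq, hl1, one_smul]
  set α : ℝ := (1 + m⁻¹) / 2 with hα
  have hα1 : 1/2 < α := by
    have : (0:ℝ) < m⁻¹ := inv_pos.mpr hm0
    rw [hα]; linarith
  have hα2 : α ≤ 1 := by rw [hα]; linarith
  refine ⟨⟨m • v + b₀, -(m • v) + b₀, α⟩, ⟨⟨m • v, hlead1, rfl⟩, ⟨-(m • v), hlead2, rfl⟩,
    by module, hα1, hα2, ?_⟩, ?_⟩
  · have hbv : b = v + b₀ := by rw [hv]; abel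
    rw [hbv]
    match_scalars <;> rw [hα] <;> field_simp <;> ring
  · rintro ⟨c₁, c₂, β⟩ ⟨⟨x₁, hx₁, rfl⟩, ⟨x₂, hx₂, rfl⟩, hmid, hβ0, hβ1, hbe⟩
    have hx2 : x₂ = -x₁ := by linear_combination (norm := module) (2:ℝ) • hmid
    subst hx2
    set d : ℝ := 2*β - 1 with hd
    have hd0 : 0 < d := by rw [hd]; linarith
    have hd0' : d ≠ 0 := ne_of_gt hd0
    have hd1 : d ≤ 1 := by rw [hd]; linarith
    have hveq : v = d • x₁ := by
      rw [hv, hd]; linear_combination (norm := module) hbe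
    have hx1v : x₁ = d⁻¹ • v := by
      rw [hveq, smul_smul, inv_mul_cancel₀ hd0', one_smul]
    have hcS : d⁻¹ ∈ S := by show d⁻¹ • v ∈ C; rw [← hx1v]; exact hx₁.1
    have hcm : d⁻¹ ≤ m := le_csSup hSbdd hcS
    set l : ℝ := d⁻¹ * m⁻¹ with hl
    have hdinv0 : 0 < d⁻¹ := inv_pos.mpr hd0
    have hl0 : 0 ≤ l := by positivity
    have hl1 : l ≤ 1 := by
      have h4 : d⁻¹ * m⁻¹ ≤ m * m⁻¹ :=
        mul_le_mul_of_nonneg_right hcm (le_of_lt (inv_pos.mpr hm0))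
      rwa [mul_inv_cancel₀ hm0'] at h4
    have heq : x₁ = l • (m • v) := by
      rw [hl, hx1v, smul_smul, mul_assoc, inv_mul_cancel₀ hm0', mul_one]
    obtain ⟨hL, hY⟩ := hx₁.2 (m • v) hmS l ⟨hl0, hl1⟩ heq
    have hdm : d = m⁻¹ := by
      have h5 : d⁻¹ * m⁻¹ = 1 := hL
      have h6 : d * m = 1 := by field_simp [hd0', hm0'] at h5; linarith
      exact eq_inv_of_mul_eq_one_left h6
    have hβα : β = α := by rw [hα, ← hdm, hd]; ring
    rw [hβα, hY]
end

section
/- Let B be a nonempty convex set in a real vector space with a centre b₀ such that B - b₀ is radially compact. Then b₀ is the only centre of B. -/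
/-- If `B` is a nonempty convex set with centre `b₀` and `B - b₀` is radially
compact, then `b₀` is the only centre of `B`. -/
theorem stmt7 {X : Type*} [AddCommGroup X] [Module ℝ X] (B : Set X)
    (hne : B.Nonempty) (hconv : Convex ℝ B) (b₀ : X) (hcentre : IsCentre B b₀)
    (hrc : RadiallyCompact ((fun b => b - b₀) '' B)) :
    ∀ b₁ : X, IsCentre B b₁ → b₁ = b₀ := by
  intro b₁ hc₁
  by_contra hne'
  set x : X := b₀ - b₁ with hxdef
  have hx : x ≠ 0 := sub_ne_zero.mpr (fun h => hne' h.symm)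
  have key : ∀ n : ℕ, b₀ + ((2 * n : ℝ)) • x ∈ B := by
    intro n
    induction n with
    | zero => simpa using hcentre.1
    | succ n ih =>
      obtain ⟨b', hb', e1⟩ := hc₁.2 _ ih
      obtain ⟨b'', hb'', e2⟩ := hcentre.2 b' hb'
      have heq : b₀ + ((2 * (n + 1 : ℕ) : ℝ)) • x = b'' := by
        push_cast
        rw [hxdef]
        linear_combination (norm := module) (2:ℝ) • e2 - (2:ℝ) • e1
      rw [heq]; exact hb''
  have hS := hrc x hx
  obtain ⟨M, hM⟩ := hS.bddAbove
  obtain ⟨n, hn⟩ := exists_nat_gt (M / 2)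
  have hmem : (2 * n : ℝ) ∈ {α : ℝ | α • x ∈ (fun b => b - b₀) '' B} := by
    exact ⟨b₀ + ((2 * n : ℝ)) • x, key n, by simp⟩
  have := hM hmem
  linarith
end

section
/- Let B be a compact convex subset of a real locally convex Hausdorff space with centre b₀, and let A(B) be the space of continuous real-valued affine functions on B with pointwise positive cone A⁺(B). Then A⁺(B) = {f ∈ A(B) : ‖f - f(b₀)·1‖_∞ ≤ f(b₀)}, where 1 is the constant function 1 and ‖·‖_∞ is the sup norm. -/
/-- `f` is affine on `B`. -/
def AffineOn {X : Type*} [AddCommGroup X] [Module ℝ X] (f : X → ℝ) (B : Set X) : Prop :=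
  ∀ b₁ ∈ B, ∀ b₂ ∈ B, ∀ t : ℝ, t ∈ Set.Icc (0 : ℝ) 1 →
    f (t • b₁ + (1 - t) • b₂) = t * f b₁ + (1 - t) * f b₂

/-- For a compact convex set `B` with centre `b₀` in a real locally convex Hausdorff
space, a continuous affine `f : B → ℝ` is positive iff `‖f - f(b₀)·1‖∞ ≤ f(b₀)`. -/
theorem stmt8 {X : Type*} [AddCommGroup X] [Module ℝ X] [TopologicalSpace X]
    [IsTopologicalAddGroup X] [ContinuousSMul ℝ X] [LocallyConvexSpace ℝ X] [T2Space X]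
    (B : Set X) (hcomp : IsCompact B) (hconv : Convex ℝ B)
    (b₀ : X) (hcentre : IsCentre B b₀)
    (f : X → ℝ) (hf : ContinuousOn f B) (haff : AffineOn f B) :
    (∀ b ∈ B, 0 ≤ f b) ↔ sSup ((fun b => |f b - f b₀|) '' B) ≤ f b₀ := by
  obtain ⟨hb₀B, hctr⟩ := hcentre
  have key : ∀ b ∈ B, ∃ b' ∈ B, f b₀ = (f b + f b') / 2 := by
    intro b hb
    obtain ⟨b', hb', hbeq⟩ := hctr b hb
    refine ⟨b', hb', ?_⟩
    have := haff b hb b' hb' (1/2) ⟨by norm_num, by norm_num⟩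
    rw [hbeq]
    norm_num at this ⊢
    linarith [this]
  constructor
  · intro hpos
    apply Real.sSup_le
    · rintro x ⟨b, hb, rfl⟩
      obtain ⟨b', hb', heq⟩ := key b hb
      have h1 := hpos b hb
      have h2 := hpos b' hb'
      rw [abs_le]
      constructor <;> [linarith; linarith]
    · have := hpos b₀ hb₀B
      obtain ⟨b', hb', heq⟩ := key b₀ hb₀B
      linarith [hpos b' hb']
  · intro hsup b hb
    have hbdd : BddAbove ((fun b => |f b - f b₀|) '' B) :=
      (hcomp.image_of_continuousOn ((hf.sub continuousOn_const).abs)).bddAbove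
    have hle : |f b - f b₀| ≤ sSup ((fun b => |f b - f b₀|) '' B) :=
      le_csSup hbdd ⟨b, hb, rfl⟩
    have := abs_le.mp (hle.trans hsup)
    linarith [this.1]
end

section
/- Let B be a compact convex subset of a real locally convex Hausdorff space with centre b₀. Then for each continuous affine function f : B → ℝ, ‖f‖_∞ = ‖f - f(b₀)·1‖_∞ + |f(b₀)|. -/
/-- For a compact convex set `B` with centre `b₀` in a real locally convex Hausdorff
space, every continuous affine `f : B → ℝ` satisfies `‖f‖∞ = ‖f - f(b₀)·1‖∞ + |f(b₀)|`. -/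
theorem stmt9 {X : Type*} [AddCommGroup X] [Module ℝ X] [TopologicalSpace X]
    [IsTopologicalAddGroup X] [ContinuousSMul ℝ X] [LocallyConvexSpace ℝ X] [T2Space X]
    (B : Set X) (hcomp : IsCompact B) (hconv : Convex ℝ B)
    (b₀ : X) (hcentre : IsCentre B b₀)
    (f : X → ℝ) (hf : ContinuousOn f B) (haff : AffineOn f B) :
    sSup ((fun b => |f b|) '' B) = sSup ((fun b => |f b - f b₀|) '' B) + |f b₀| := by
  obtain ⟨hb₀, hsym⟩ := hcentre
  have hne : B.Nonempty := ⟨b₀, hb₀⟩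
  -- mirror: for b ∈ B, there is b' ∈ B with f b' = 2 * f b₀ - f b
  have hmirror : ∀ b ∈ B, ∃ b' ∈ B, f b' = 2 * f b₀ - f b := by
    intro b hb
    obtain ⟨b', hb', heq⟩ := hsym b hb
    refine ⟨b', hb', ?_⟩
    have := haff b hb b' hb' (1/2) ⟨by norm_num, by norm_num⟩
    rw [show (1 : ℝ) - 1/2 = 1/2 by norm_num] at this
    rw [← heq] at this
    linarith
  have hfabs : ContinuousOn (fun b => |f b|) B := hf.abs
  have hgc : ContinuousOn (fun b => |f b - f b₀|) B := (hf.sub continuousOn_const).abs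
  have hbdd1 : BddAbove ((fun b => |f b|) '' B) := (hcomp.image_of_continuousOn hfabs).bddAbove
  have hbdd2 : BddAbove ((fun b => |f b - f b₀|) '' B) :=
    (hcomp.image_of_continuousOn hgc).bddAbove
  set M := sSup ((fun b => |f b - f b₀|) '' B) with hM
  obtain ⟨b₁, hb₁, hMeq⟩ := hcomp.exists_sSup_image_eq hne hgc
  have hlp : ∀ x y : ℝ, 0 ≤ x * y → |x + y| = |x| + |y| := by
    intro x y h
    rcases le_or_gt 0 x with hx | hx <;> rcases le_or_gt 0 y with hy | hy
    · rw [abs_of_nonneg hx, abs_of_nonneg hy, abs_of_nonneg (by linarith)]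
    · have hx0 : x = 0 := by nlinarith
      subst hx0; simp
    · have hy0 : y = 0 := by nlinarith
      subst hy0; simp
    · rw [abs_of_neg hx, abs_of_neg hy, abs_of_nonpos (by linarith)]; ring
  apply le_antisymm
  · apply csSup_le (hne.image _)
    rintro x ⟨b, hb, rfl⟩
    have h1 : |f b - f b₀| ≤ M := le_csSup hbdd2 ⟨b, hb, rfl⟩
    have h2 : |f b| ≤ |f b - f b₀| + |f b₀| := by
      have := abs_add_le (f b - f b₀) (f b₀); simpa using this
    linarith
  · obtain ⟨b₂, hb₂, hb₂eq⟩ := hmirror b₁ hb₁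
    have key : ∃ b ∈ B, |f b| = M + |f b₀| := by
      rcases le_or_gt 0 ((f b₁ - f b₀) * f b₀) with h | h
      · refine ⟨b₁, hb₁, ?_⟩
        rw [hM, hMeq]
        have := hlp (f b₁ - f b₀) (f b₀) h
        simpa using this
      · refine ⟨b₂, hb₂, ?_⟩
        rw [hM, hMeq]
        have hsign : 0 ≤ (f b₂ - f b₀) * f b₀ := by rw [hb₂eq]; nlinarith
        have habs2 : |f b₂ - f b₀| = |f b₁ - f b₀| := by
          rw [hb₂eq, show 2 * f b₀ - f b₁ - f b₀ = -(f b₁ - f b₀) by ring, abs_neg]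
        have := hlp (f b₂ - f b₀) (f b₀) hsign
        rw [habs2] at this
        simpa using this
    obtain ⟨b, hb, hbeq⟩ := key
    calc M + |f b₀| = |f b| := hbeq.symm
    _ ≤ _ := le_csSup hbdd1 ⟨b, hb, rfl⟩
end

section
/- Let (V, B) be a base normed space with associated functional e, and fix b₀ ∈ B. The following are equivalent: (i) b₀ is a centre of B; (ii) V⁺ = {v ∈ V : ‖v - e(v)b₀‖ ≤ e(v)}; (iii) B = {v ∈ V : e(v) = 1 and ‖v - b₀‖ ≤ 1}. -/
/-- In a base normed space `(V, B)` with functional `e` and `b₀ ∈ B`, TFAE: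
(i) `b₀` is a centre of `B`; (ii) `V⁺ = {v : ‖v - e(v) b₀‖ ≤ e(v)}`;
(iii) `B = {v : e(v) = 1 ∧ ‖v - b₀‖ ≤ 1}`. -/
theorem stmt11 {V : Type*} [NormedAddCommGroup V] [NormedSpace ℝ V]
    (C B : Set V) (e : V →ₗ[ℝ] ℝ)
    (hCadd : ∀ x ∈ C, ∀ y ∈ C, x + y ∈ C)
    (hCsmul : ∀ x ∈ C, ∀ r : ℝ, 0 ≤ r → r • x ∈ C)
    (hBconv : Convex ℝ B)
    (hbase : ∀ x ∈ C, x ≠ 0 → ∃! p : ℝ × V, 0 < p.1 ∧ p.2 ∈ B ∧ x = p.1 • p.2)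
    (he : ∀ v : V, v ∈ C ↔ e v = ‖v‖)
    (hB : B = {v | v ∈ C ∧ e v = 1})
    (hnorm : ∀ v : V, ‖v‖ = gauge (convexHull ℝ (B ∪ -B)) v)
    (b₀ : V) (hb₀ : b₀ ∈ B) :
    (IsCentre B b₀ ↔ C = {v : V | ‖v - e v • b₀‖ ≤ e v}) ∧
    (IsCentre B b₀ ↔ B = {v : V | e v = 1 ∧ ‖v - b₀‖ ≤ 1}) := by
  set K := convexHull ℝ (B ∪ -B) with hK
  -- basic facts
  have hBC : ∀ b ∈ B, b ∈ C ∧ e b = 1 := by intro b hb; rw [hB] at hb; exact hb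
  have hb₀C : b₀ ∈ C := (hBC b₀ hb₀).1
  have heb₀ : e b₀ = 1 := (hBC b₀ hb₀).2
  have hnormb₀ : ‖b₀‖ = 1 := by rw [← (he b₀).1 hb₀C, heb₀]
  have h0C : (0 : V) ∈ C := by
    have := hCsmul b₀ hb₀C 0 le_rfl
    simpa using this
  -- e is bounded by 1 on K
  have heK : ∀ k ∈ K, |e k| ≤ 1 := by
    have hsub : K ⊆ {x : V | |e x| ≤ 1} := by
      apply convexHull_min
      · rintro x (hx | hx)
        · show |e x| ≤ 1
          rw [(hBC x hx).2]; norm_num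
        · show |e x| ≤ 1
          have hbx : -x ∈ B := Set.mem_neg.1 hx
          have : e (-x) = 1 := (hBC _ hbx).2
          rw [map_neg] at this
          rw [show e x = -1 by linarith]
          norm_num
      · intro x hx y hy a b ha hb hab
        simp only [Set.mem_setOf_eq, map_add, map_smul, smul_eq_mul] at *
        calc |a * e x + b * e y| ≤ |a * e x| + |b * e y| := abs_add_le _ _
          _ = a * |e x| + b * |e y| := by rw [abs_mul, abs_mul, abs_of_nonneg ha, abs_of_nonneg hb]
          _ ≤ a * 1 + b * 1 := by
              gcongr
          _ = 1 := by linarith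
    intro k hk; exact hsub hk
  -- extract an element from the gauge inf
  have hgauge_lt : ∀ v : V, v ≠ 0 → ∀ t : ℝ, ‖v‖ < t →
      ∃ r : ℝ, 0 < r ∧ r < t ∧ ∃ k ∈ K, v = r • k := by
    intro v hv t ht
    have hgv : gauge K v = ‖v‖ := (hnorm v).symm
    have hpos : 0 < gauge K v := by rw [hgv]; exact norm_pos_iff.2 hv
    have hgv' : gauge K v = sInf {r ∈ Set.Ioi (0:ℝ) | r⁻¹ • v ∈ K} := gauge_def'
    have hne : {r ∈ Set.Ioi (0:ℝ) | r⁻¹ • v ∈ K}.Nonempty := by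
      by_contra h
      rw [Set.not_nonempty_iff_eq_empty] at h
      rw [h, Real.sInf_empty] at hgv'
      linarith
    have hlt : sInf {r ∈ Set.Ioi (0:ℝ) | r⁻¹ • v ∈ K} < t := by
      rw [← hgv', hgv]; exact ht
    obtain ⟨r, ⟨hr0, hrK⟩, hrt⟩ := exists_lt_of_csInf_lt hne hlt
    have hr0' : (0:ℝ) < r := hr0
    refine ⟨r, hr0', hrt, r⁻¹ • v, hrK, ?_⟩
    rw [smul_smul, mul_inv_cancel₀ (ne_of_gt hr0'), one_smul]
  -- |e v| ≤ ‖v‖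
  have habs : ∀ v : V, |e v| ≤ ‖v‖ := by
    intro v
    by_contra h
    push_neg at h
    have hv : v ≠ 0 := by
      intro h0; rw [h0] at h; simp at h
    obtain ⟨r, hr0, hrt, k, hk, rfl⟩ := hgauge_lt v hv (|e v|) h
    have : |e (r • k)| = r * |e k| := by
      rw [map_smul, smul_eq_mul, abs_mul, abs_of_pos hr0]
    nlinarith [heK k hk, abs_nonneg (e k)]
  -- key 1 : centre implies all of B is within distance 1 of b₀
  have key1 : IsCentre B b₀ → ∀ b ∈ B, ‖b - b₀‖ ≤ 1 := by
    rintro ⟨-, hc⟩ b hb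
    obtain ⟨b', hb', hbb'⟩ := hc b hb
    have hmem : b - b₀ ∈ K := by
      have : b - b₀ = (1/2 : ℝ) • b + (1/2 : ℝ) • (-b') := by
        rw [hbb']; module
      rw [this]
      have h1 : b ∈ K := subset_convexHull ℝ _ (Or.inl hb)
      have h2 : -b' ∈ K := subset_convexHull ℝ _ (Or.inr (by simpa [Set.mem_neg] using hb'))
      exact (convex_convexHull ℝ (B ∪ -B)) h1 h2 (by norm_num) (by norm_num) (by norm_num)
    rw [hnorm]
    exact gauge_le_one_of_mem hmem
  -- key 2 : centre implies {e = 1, ‖· - b₀‖ ≤ 1} ⊆ B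
  have key2 : IsCentre B b₀ → ∀ v : V, e v = 1 → ‖v - b₀‖ ≤ 1 → v ∈ B := by
    rintro ⟨-, hc⟩ v hev hvb
    set u := v - b₀ with hu
    have heu : e u = 0 := by simp [hu, map_sub, hev, heb₀]
    rcases eq_or_ne u 0 with h0 | h0
    · have : v = b₀ := by rw [← sub_eq_zero]; exact h0
      rw [this]; exact hb₀
    -- for every t > 1, b₀ + t⁻¹ • u ∈ B
    have hstep : ∀ t : ℝ, 1 < t → b₀ + t⁻¹ • u ∈ B := by
      intro t ht
      obtain ⟨r, hr0, hrt, k, hk, hku⟩ := hgauge_lt u h0 t (lt_of_le_of_lt hvb ht)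
      -- decompose k
      have hKjoin : K = convexJoin ℝ B (-B) := by
        rw [hK]
        exact hBconv.convexHull_union hBconv.neg ⟨b₀, hb₀⟩ ⟨-b₀, by simpa using hb₀⟩
      rw [hKjoin, mem_convexJoin] at hk
      obtain ⟨p, hp, q', hq', hseg⟩ := hk
      obtain ⟨q, hq, rfl⟩ : ∃ q ∈ B, -q = q' :=
        ⟨-q', Set.mem_neg.1 hq', neg_neg q'⟩
      obtain ⟨a, b, ha, hb, hab, hkeq⟩ := hseg
      have hek : e k = 0 := by
        have : e u = r * e k := by rw [hku, map_smul, smul_eq_mul]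
        rw [heu] at this
        have := this.symm
        rcases mul_eq_zero.1 this with h | h
        · exact absurd h (ne_of_gt hr0)
        · exact h
      have heab : a - b = 0 := by
        have hk2 : e k = a * e p - b * e q := by
          rw [← hkeq, map_add, map_smul, map_smul, map_neg]
          simp only [smul_eq_mul]
          ring
        rw [(hBC p hp).2, (hBC q hq).2, hek] at hk2
        linarith
      have ha2 : a = 1/2 := by linarith
      have hb2 : b = 1/2 := by linarith
      -- m := b₀ + r⁻¹ • u ∈ B
      obtain ⟨q₂, hq₂, hq₂eq⟩ := hc q hq
      have hueq : u = (r/2) • (p - q) := by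
        rw [hku, ← hkeq, ha2, hb2]; module
      have hm : b₀ + r⁻¹ • u ∈ B := by
        have hr2 : r⁻¹ * (r/2) = 1/2 := by field_simp
        have : b₀ + r⁻¹ • u = (1/2 : ℝ) • p + (1/2 : ℝ) • q₂ := by
          rw [hueq, hq₂eq, smul_smul, hr2]
          module
        rw [this]
        exact hBconv hp hq₂ (by norm_num) (by norm_num) (by norm_num)
      -- convex combination with b₀
      have hrt' : r / t ≤ 1 := by
        rw [div_le_one (by linarith)]; exact le_of_lt hrt
      have hrt0 : 0 ≤ r / t := le_of_lt (div_pos hr0 (by linarith))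
      have : b₀ + t⁻¹ • u = (1 - r/t) • b₀ + (r/t) • (b₀ + r⁻¹ • u) := by
        have h3 : (r/t) * r⁻¹ = t⁻¹ := by
          field_simp
        rw [smul_add, smul_smul, h3]
        module
      rw [this]
      exact hBconv hb₀ hm (by linarith) hrt0 (by ring)
    -- pass to the limit t → 1⁺
    have hle : ‖b₀ + u‖ ≤ 1 := by
      by_contra h
      push_neg at h
      set δ := ‖b₀ + u‖ - 1 with hδ
      have hδ0 : 0 < δ := by simp [hδ]; linarith
      set t := 1 + δ/2 with htdef
      have ht1 : 1 < t := by simp [htdef]; linarith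
      have hmem := hstep t ht1
      have hnorm1 : ‖b₀ + t⁻¹ • u‖ = 1 := by
        have hmc := (hBC _ hmem)
        rw [← (he _).1 hmc.1, hmc.2]
      have hineq : ‖b₀ + u‖ ≤ 1 + (1 - t⁻¹) * ‖u‖ := by
        calc ‖b₀ + u‖ = ‖(b₀ + t⁻¹ • u) + (1 - t⁻¹) • u‖ := by
              congr 1; module
          _ ≤ ‖b₀ + t⁻¹ • u‖ + ‖(1 - t⁻¹) • u‖ := norm_add_le _ _
          _ = 1 + (1 - t⁻¹) * ‖u‖ := by
              rw [hnorm1, norm_smul, Real.norm_eq_abs, abs_of_nonneg]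
              have : t⁻¹ ≤ 1 := by
                rw [inv_le_one_iff₀]; right; linarith
              linarith
      have ht0 : (0:ℝ) < t := by linarith
      have htinv : 1 - t⁻¹ < δ := by
        have h1 : t⁻¹ * t = 1 := inv_mul_cancel₀ (ne_of_gt ht0)
        nlinarith [inv_pos.2 ht0]
      have hu1 : ‖u‖ ≤ 1 := hvb
      have ht' : 0 ≤ 1 - t⁻¹ := by
        have : t⁻¹ ≤ 1 := by
          rw [inv_le_one_iff₀]; right; linarith
        linarith
      have : ‖b₀ + u‖ ≤ 1 + (1 - t⁻¹) := by nlinarith [norm_nonneg u]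
      simp only [hδ] at htinv
      linarith
    have hge : (1:ℝ) ≤ ‖b₀ + u‖ := by
      have := habs (b₀ + u)
      have : e (b₀ + u) = 1 := by simp [map_add, heb₀, heu]
      calc (1:ℝ) = |e (b₀ + u)| := by rw [this]; norm_num
        _ ≤ ‖b₀ + u‖ := habs _
    have hveq : v = b₀ + u := by rw [hu]; abel
    have heq : ‖b₀ + u‖ = 1 := le_antisymm hle hge
    have hmc : b₀ + u ∈ C := by
      rw [he, heq]
      simp [map_add, heb₀, heu]
    rw [hB, hveq]
    exact ⟨hmc, by simp [map_add, heb₀, heu]⟩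
  -- (i) → (iii)
  have hiii : IsCentre B b₀ → B = {v : V | e v = 1 ∧ ‖v - b₀‖ ≤ 1} := by
    intro h
    ext v
    constructor
    · intro hv; exact ⟨(hBC v hv).2, key1 h v hv⟩
    · rintro ⟨h1, h2⟩; exact key2 h v h1 h2
  -- (i) → (ii)
  have hii : IsCentre B b₀ → C = {v : V | ‖v - e v • b₀‖ ≤ e v} := by
    intro h
    ext v
    constructor
    · intro hv
      have hev : e v = ‖v‖ := (he v).1 hv
      rcases eq_or_ne v 0 with rfl | hv0
      · simp
      · have hpos : 0 < e v := by rw [hev]; exact norm_pos_iff.2 hv0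
        set b := (e v)⁻¹ • v with hbdef
        have hbC : b ∈ C := hCsmul v hv _ (inv_nonneg.2 hpos.le)
        have heb : e b = 1 := by
          simp only [hbdef, map_smul, smul_eq_mul]
          exact inv_mul_cancel₀ (ne_of_gt hpos)
        have hbB : b ∈ B := by rw [hB]; exact ⟨hbC, heb⟩
        have hb1 := key1 h b hbB
        have hveq : v - e v • b₀ = e v • (b - b₀) := by
          rw [hbdef, smul_sub, smul_smul, mul_inv_cancel₀ (ne_of_gt hpos), one_smul]
        show ‖v - e v • b₀‖ ≤ e v
        rw [hveq, norm_smul, Real.norm_eq_abs, abs_of_pos hpos]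
        nlinarith
    · intro hv
      simp only [Set.mem_setOf_eq] at hv
      have hev0 : 0 ≤ e v := le_trans (norm_nonneg _) hv
      rcases eq_or_lt_of_le hev0 with heq | hpos
      · have h1 : ‖v‖ ≤ 0 := by
          have h2 := hv; rw [← heq] at h2; simpa using h2
        have : v = 0 := by simpa using le_antisymm h1 (norm_nonneg v)
        rw [this]; exact h0C
      · set w := (e v)⁻¹ • v with hwdef
        have hew : e w = 1 := by
          simp only [hwdef, map_smul, smul_eq_mul]
          exact inv_mul_cancel₀ (ne_of_gt hpos)
        have hwb : ‖w - b₀‖ ≤ 1 := by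
          have hrw : w - b₀ = (e v)⁻¹ • (v - e v • b₀) := by
            rw [hwdef, smul_sub, smul_smul, inv_mul_cancel₀ (ne_of_gt hpos), one_smul]
          rw [hrw, norm_smul, Real.norm_eq_abs, abs_of_pos (inv_pos.2 hpos),
            inv_mul_le_iff₀ hpos]
          simpa using hv
        have hwB := key2 h w hew hwb
        have hvrw : v = e v • w := by
          rw [hwdef, smul_smul, mul_inv_cancel₀ (ne_of_gt hpos), one_smul]
        rw [hvrw]; exact hCsmul w (hBC w hwB).1 _ hpos.le
  -- (ii) → (i)
  have hii' : C = {v : V | ‖v - e v • b₀‖ ≤ e v} → IsCentre B b₀ := by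
    intro hCeq
    refine ⟨hb₀, fun b hb => ?_⟩
    have hbb : ‖b - b₀‖ ≤ 1 := by
      have h1 : b ∈ {v : V | ‖v - e v • b₀‖ ≤ e v} := by rw [← hCeq]; exact (hBC b hb).1
      simpa [(hBC b hb).2] using h1
    set b' := (2:ℝ) • b₀ - b with hb'def
    have heb' : e b' = 1 := by
      simp [hb'def, map_sub, map_smul, heb₀, (hBC b hb).2]
      norm_num
    have hb'C : b' ∈ C := by
      rw [hCeq]
      show ‖b' - e b' • b₀‖ ≤ e b'
      rw [heb']
      have : b' - (1:ℝ) • b₀ = b₀ - b := by rw [hb'def]; module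
      rw [this, norm_sub_rev]
      exact hbb
    refine ⟨b', by rw [hB]; exact ⟨hb'C, heb'⟩, by rw [hb'def]; module⟩
  -- (iii) → (i)
  have hiii' : B = {v : V | e v = 1 ∧ ‖v - b₀‖ ≤ 1} → IsCentre B b₀ := by
    intro hBeq
    refine ⟨hb₀, fun b hb => ?_⟩
    have hbb : ‖b - b₀‖ ≤ 1 := by
      have h1 : b ∈ {v : V | e v = 1 ∧ ‖v - b₀‖ ≤ 1} := by rw [← hBeq]; exact hb
      exact h1.2
    set b' := (2:ℝ) • b₀ - b with hb'def
    have heb' : e b' = 1 := by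
      simp [hb'def, map_sub, map_smul, heb₀, (hBC b hb).2]
      norm_num
    have hb'B : b' ∈ B := by
      rw [hBeq]
      refine ⟨heb', ?_⟩
      have : b' - b₀ = b₀ - b := by rw [hb'def]; module
      rw [this, norm_sub_rev]
      exact hbb
    exact ⟨b', hb'B, by rw [hb'def]; module⟩
  exact ⟨⟨hii, hii'⟩, ⟨hiii, hiii'⟩⟩
end

section
/- For n ≥ 3, the standard simplex Bₙ = {(αᵢ) ∈ ℝⁿ : αᵢ ≥ 0, Σαᵢ = 1}, regarded as the base of the base normed space ℓ₁ⁿ(ℝ), has no centre. -/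
/-- For `n ≥ 3`, the standard simplex, the base of the base normed space `ℓ₁ⁿ(ℝ)`,
has no centre. -/
theorem stmt14 (n : ℕ) (hn : 3 ≤ n) :
    ¬ ∃ b₀ : PiLp 1 (fun _ : Fin n => ℝ),
      IsCentre {x : PiLp 1 (fun _ : Fin n => ℝ) |
        (∀ i, 0 ≤ x i) ∧ ∑ i, x i = 1} b₀ := by
  rintro ⟨b₀, ⟨⟨hpos, hsum⟩, hc⟩⟩
  have key : ∀ i : Fin n, (1:ℝ)/2 ≤ b₀ i := by
    intro i
    have hmem : (WithLp.toLp 1 (Pi.single i 1) : PiLp 1 fun _ : Fin n => ℝ) ∈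
        {x : PiLp 1 (fun _ : Fin n => ℝ) | (∀ i, 0 ≤ x i) ∧ ∑ i, x i = 1} := by
      constructor
      · intro j
        rcases eq_or_ne j i with rfl | h
        · simp
        · simp [Pi.single_eq_of_ne h]
      · simp
    obtain ⟨b', ⟨hb'pos, _⟩, heq⟩ := hc _ hmem
    have h := congrArg (fun x : PiLp 1 (fun _ : Fin n => ℝ) => x i) heq
    simp only [PiLp.add_apply, PiLp.smul_apply, PiLp.toLp_apply, Pi.single_eq_same, smul_eq_mul] at h
    have := hb'pos i
    rw [h]
    linarith
  have hbound : (n : ℝ) * (1/2) ≤ ∑ i, b₀ i := by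
    calc (n : ℝ) * (1/2) = ∑ _i : Fin n, (1:ℝ)/2 := by
          simp [Finset.sum_const, mul_comm]
      _ ≤ ∑ i, b₀ i := Finset.sum_le_sum fun i _ => key i
  have hn' : (3:ℝ) ≤ n := by exact_mod_cast hn
  rw [hsum] at hbound
  linarith
end

section
/- Let (V, e) be an order unit space with state space S(V), and let τ ∈ S(V). The following are equivalent: (1) τ is a centre of S(V); (2) v ≤ 2τ(v)e for every v ∈ V⁺; (3) V⁺ = {v ∈ V : ‖v - τ(v)e‖ ≤ τ(v)}. -/
/-- For a state `τ` on an order unit space `(V, e)`, TFAE: (1) `τ` is a centre of the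
state space; (2) `v ≤ 2 τ(v) e` for every `v ≥ 0`;
(3) `V⁺ = {v : ‖v - τ(v) e‖ ≤ τ(v)}`. -/
theorem stmt15 {V : Type*} [NormedAddCommGroup V] [NormedSpace ℝ V] [PartialOrder V]
    [CovariantClass V V (· + ·) (· ≤ ·)]
    (e : V)
    (hsmulpos : ∀ (r : ℝ) (v : V), 0 ≤ r → 0 ≤ v → 0 ≤ r • v)
    (hArch : ∀ v : V, (∀ r : ℝ, 0 < r → 0 ≤ v + r • e) → 0 ≤ v)
    (hunit : ∀ v : V, ∃ r : ℝ, 0 < r ∧ v ≤ r • e)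
    (hnorm : ∀ v : V, ‖v‖ = sInf {r : ℝ | 0 < r ∧ -(r • e) ≤ v ∧ v ≤ r • e})
    (τ : V →ₗ[ℝ] ℝ) (hτpos : ∀ v : V, 0 ≤ v → 0 ≤ τ v) (hτe : τ e = 1) :
    (IsCentre {f : V →ₗ[ℝ] ℝ | (∀ v : V, 0 ≤ v → 0 ≤ f v) ∧ f e = 1} τ ↔
      ∀ v : V, 0 ≤ v → v ≤ (2 * τ v) • e) ∧
    (IsCentre {f : V →ₗ[ℝ] ℝ | (∀ v : V, 0 ≤ v → 0 ≤ f v) ∧ f e = 1} τ ↔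
      {v : V | 0 ≤ v} = {v : V | ‖v - τ v • e‖ ≤ τ v}) := by
  classical
  -- basic facts
  have habs : ∀ a b : V, a ≤ b ↔ 0 ≤ b - a := fun a b => sub_nonneg.symm
  have hneg : ∀ a b : V, a ≤ b → -b ≤ -a := by
    intro a b h
    have h1 := sub_nonneg.2 h
    rw [← neg_sub_neg] at h1
    exact sub_nonneg.1 h1
  have hnegle : ∀ a b : V, -a ≤ b ↔ -b ≤ a := by
    intro a b
    constructor
    · intro h; simpa using hneg _ _ h
    · intro h; simpa using hneg _ _ h
  have epos : (0:V) ≤ e := by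
    obtain ⟨r, hr, hre⟩ := hunit 0
    have h := hsmulpos r⁻¹ (r • e) (by positivity) hre
    rwa [smul_smul, inv_mul_cancel₀ hr.ne', one_smul] at h
  have escale : ∀ r s : ℝ, r ≤ s → r • e ≤ s • e := by
    intro r s hrs
    have h := hsmulpos (s - r) e (by linarith) epos
    have h2 : r • e + 0 ≤ r • e + (s - r) • e := add_le_add_right h _
    rw [add_zero, ← add_smul] at h2
    simpa using h2
  have hτscale : ∀ r : ℝ, τ (r • e) = r := by
    intro r; rw [map_smul, hτe, smul_eq_mul, mul_one]
  -- the state set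
  set St : Set (V →ₗ[ℝ] ℝ) := {f : V →ₗ[ℝ] ℝ | (∀ v : V, 0 ≤ v → 0 ≤ f v) ∧ f e = 1}
    with hSt
  -- Step B : (2) → (1)
  have stepB : (∀ v : V, 0 ≤ v → v ≤ (2 * τ v) • e) → IsCentre St τ := by
    intro h2
    refine ⟨⟨hτpos, hτe⟩, ?_⟩
    intro f hf
    refine ⟨(2:ℝ) • τ - f, ⟨?_, ?_⟩, ?_⟩
    · intro v hv
      have h1 : f v ≤ f ((2 * τ v) • e) := by
        have := hf.1 _ (sub_nonneg.2 (h2 v hv))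
        rw [map_sub] at this; linarith
      rw [map_smul, hf.2, smul_eq_mul, mul_one] at h1
      simp only [LinearMap.sub_apply, LinearMap.smul_apply, smul_eq_mul]
      linarith
    · simp only [LinearMap.sub_apply, LinearMap.smul_apply, hf.2, hτe, smul_eq_mul]
      norm_num
    · ext v
      simp only [LinearMap.add_apply, LinearMap.smul_apply, LinearMap.sub_apply, smul_eq_mul]
      ring
  -- norm characterizations
  have normle : ∀ (x : V) (t : ℝ), 0 ≤ t → -(t • e) ≤ x → x ≤ t • e → ‖x‖ ≤ t := by
    intro x t ht h1 h2
    rw [hnorm]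
    have key : ∀ ε : ℝ, 0 < ε →
        sInf {r : ℝ | 0 < r ∧ -(r • e) ≤ x ∧ x ≤ r • e} ≤ t + ε := by
      intro ε hε
      apply csInf_le ⟨0, fun r hr => hr.1.le⟩
      refine ⟨by linarith, ?_, le_trans h2 (escale _ _ (by linarith))⟩
      exact le_trans (hneg _ _ (escale t (t + ε) (by linarith))) h1
    linarith [key ((sInf {r : ℝ | 0 < r ∧ -(r • e) ≤ x ∧ x ≤ r • e} - t) / 2),
      le_of_forall_pos_le_add key]
  have normge : ∀ (x : V) (t : ℝ), ‖x‖ ≤ t → -(t • e) ≤ x ∧ x ≤ t • e := by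
    intro x t hxt
    have Sne' : {r : ℝ | 0 < r ∧ -(r • e) ≤ x ∧ x ≤ r • e}.Nonempty := by
      obtain ⟨r1, hr1, hx1⟩ := hunit x
      obtain ⟨r2, hr2, hx2⟩ := hunit (-x)
      refine ⟨r1 + r2, by linarith, ?_, le_trans hx1 (escale _ _ (by linarith))⟩
      have h := le_trans hx2 (escale r2 (r1 + r2) (by linarith))
      exact (hnegle _ _).2 h
    have key : ∀ r : ℝ, 0 < r → -((t + r) • e) ≤ x ∧ x ≤ (t + r) • e := by
      intro r hr
      have hlt : sInf {r : ℝ | 0 < r ∧ -(r • e) ≤ x ∧ x ≤ r • e} < t + r := by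
        rw [← hnorm]; linarith
      obtain ⟨s, ⟨hs0, hs1, hs2⟩, hslt⟩ := exists_lt_of_csInf_lt Sne' hlt
      exact ⟨le_trans (hneg _ _ (escale s (t + r) hslt.le)) hs1,
        le_trans hs2 (escale _ _ hslt.le)⟩
    constructor
    · rw [habs _ x, sub_neg_eq_add]
      apply hArch
      intro r hr
      have h := (key r hr).1
      rw [habs _ x, sub_neg_eq_add, add_smul] at h
      calc (0:V) ≤ x + (t • e + r • e) := h
      _ = x + t • e + r • e := by abel
    · rw [habs]
      apply hArch
      intro r hr
      have h := (key r hr).2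
      rw [habs, add_smul] at h
      calc (0:V) ≤ t • e + r • e - x := h
      _ = t • e - x + r • e := by abel
  -- Step C : (2) → (3)
  have stepC : (∀ v : V, 0 ≤ v → v ≤ (2 * τ v) • e) →
      {v : V | 0 ≤ v} = {v : V | ‖v - τ v • e‖ ≤ τ v} := by
    intro h2
    ext v
    simp only [Set.mem_setOf_eq]
    constructor
    · intro hv
      have ht : 0 ≤ τ v := hτpos v hv
      apply normle _ _ ht
      · rw [habs, sub_neg_eq_add, sub_add_cancel]
        exact hv
      · have h := h2 v hv
        rw [habs] at h ⊢
        have h1 : (2 * τ v) • e - v = τ v • e - (v - τ v • e) := by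
          rw [show (2 * τ v) • e = τ v • e + τ v • e by rw [← add_smul]; ring_nf]
          abel
        rw [← h1]; exact h
    · intro hv
      have h := (normge _ _ hv).1
      rw [habs, sub_neg_eq_add, sub_add_cancel] at h
      exact h
  -- Step D : (3) → (2)
  have stepD : {v : V | 0 ≤ v} = {v : V | ‖v - τ v • e‖ ≤ τ v} →
      ∀ v : V, 0 ≤ v → v ≤ (2 * τ v) • e := by
    intro h3 v hv
    have hv' : ‖v - τ v • e‖ ≤ τ v := (Set.ext_iff.1 h3 v).1 hv
    have h := (normge _ _ hv').2
    rw [habs] at h ⊢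
    have h1 : (2 * τ v) • e - v = τ v • e - (v - τ v • e) := by
      rw [show (2 * τ v) • e = τ v • e + τ v • e by rw [← add_smul]; ring_nf]
      abel
    rw [h1]; exact h
  -- Step A : (1) → (2), via Hahn-Banach (Riesz extension)
  have stepA : IsCentre St τ → ∀ v : V, 0 ≤ v → v ≤ (2 * τ v) • e := by
    intro hc v hv
    by_contra hne
    -- v ≠ 0
    have hv0 : v ≠ 0 := by
      rintro rfl
      exact hne (by simp)
    -- the sublinear functional M
    set M : V → ℝ := fun x => sInf {r : ℝ | x ≤ r • e} with hMdef
    have Sne : ∀ x : V, {r : ℝ | x ≤ r • e}.Nonempty := fun x =>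
      (hunit x).imp fun r hr => hr.2
    have Sbdd : ∀ x : V, BddBelow {r : ℝ | x ≤ r • e} := by
      intro x
      refine ⟨τ x, fun r hr => ?_⟩
      have h := hτpos _ (sub_nonneg.2 hr)
      rw [map_sub, hτscale] at h
      linarith only [h]
    have hM_le : ∀ (x : V) (r : ℝ), x ≤ r • e → M x ≤ r := fun x r h =>
      csInf_le (Sbdd x) h
    have hτleM : ∀ x : V, τ x ≤ M x := by
      intro x
      apply le_csInf (Sne x)
      intro r hr
      have h := hτpos _ (sub_nonneg.2 hr)
      rw [map_sub, hτscale] at h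
      linarith only [h]
    have hxleM : ∀ x : V, x ≤ M x • e := by
      intro x
      rw [habs]
      apply hArch
      intro r hr
      obtain ⟨s, hsmem, hslt⟩ := exists_lt_of_csInf_lt (Sne x)
        (lt_add_of_pos_right (M x) hr)
      have h1 : x ≤ (M x + r) • e := le_trans hsmem (escale _ _ hslt.le)
      rw [habs, add_smul] at h1
      calc (0:V) ≤ M x • e + r • e - x := h1
      _ = M x • e - x + r • e := by abel
    have hMhom : ∀ c : ℝ, 0 < c → ∀ x : V, M (c • x) = c * M x := by
      intro c hc x
      apply le_antisymm
      · apply hM_le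
        have h := hsmulpos c _ hc.le (sub_nonneg.2 (hxleM x))
        rw [smul_sub, smul_smul] at h
        exact sub_nonneg.1 h
      · have h1 := hsmulpos c⁻¹ _ (by positivity) (sub_nonneg.2 (hxleM (c • x)))
        rw [smul_sub, smul_smul, smul_smul, inv_mul_cancel₀ hc.ne', one_smul] at h1
        have h2 : M x ≤ c⁻¹ * M (c • x) := hM_le _ _ (sub_nonneg.1 h1)
        have h3 := mul_le_mul_of_nonneg_left h2 hc.le
        rwa [← mul_assoc, mul_inv_cancel₀ hc.ne', one_mul] at h3
    have hMadd : ∀ x y : V, M (x + y) ≤ M x + M y := by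
      intro x y
      apply hM_le
      rw [add_smul]
      exact add_le_add (hxleM x) (hxleM y)
    have hM0 : 0 ≤ M 0 := by simpa using hτleM 0
    -- 2 τ v < M v
    have hMv : 2 * τ v < M v := by
      by_contra h
      push_neg at h
      exact hne (le_trans (hxleM v) (escale _ _ h))
    -- partial linear map on span {v}
    have hf : ∀ x : (LinearPMap.mkSpanSingleton v (M v) hv0 : V →ₗ.[ℝ] ℝ).domain,
        (LinearPMap.mkSpanSingleton v (M v) hv0 : V →ₗ.[ℝ] ℝ) x ≤ M x := by
      rintro ⟨x, hx⟩
      rw [LinearPMap.domain_mkSpanSingleton] at hx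
      obtain ⟨c, rfl⟩ := Submodule.mem_span_singleton.1 hx
      rw [LinearPMap.mkSpanSingleton'_apply]
      rcases lt_trichotomy c 0 with h | h | h
      · have hc : 0 < -c := by linarith only [h]
        have h1 : M ((-c) • v) = -c * M v := hMhom _ hc v
        have h2 : M (c • v) + M ((-c) • v) ≥ 0 := by
          have := hMadd (c • v) ((-c) • v)
          rw [← add_smul, add_neg_cancel, zero_smul] at this
          linarith only [this, hM0]
        rw [h1] at h2
        simp only [smul_eq_mul, RingHom.id_apply]
        linarith only [h2]
      · subst h
        simp only [zero_smul, smul_eq_mul, zero_mul]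
        simpa using hM0
      · rw [hMhom c h v, smul_eq_mul, RingHom.id_apply]
    obtain ⟨g, hg1, hg2⟩ := exists_extension_of_le_sublinear
      (LinearPMap.mkSpanSingleton v (M v) hv0) M hMhom hMadd hf
    have hgv : g v = M v := by
      have h := hg1 ⟨v, Submodule.mem_span_singleton_self v⟩
      rwa [LinearPMap.mkSpanSingleton_apply] at h
    have hgpos : ∀ x : V, 0 ≤ x → 0 ≤ g x := by
      intro x hx
      have h1 : g (-x) ≤ M (-x) := hg2 (-x)
      have h2 : M (-x) ≤ 0 := hM_le _ 0 (by rw [zero_smul]; exact neg_nonpos.2 hx)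
      rw [map_neg] at h1
      linarith only [h1, h2]
    have hge : g e = 1 := by
      have h1 : g e ≤ M e := hg2 e
      have h2 : M e ≤ 1 := hM_le _ 1 (by rw [one_smul])
      have h3 : g (-e) ≤ M (-e) := hg2 (-e)
      have h4 : M (-e) ≤ -1 := hM_le _ (-1) (by rw [neg_one_smul])
      rw [map_neg] at h3
      linarith only [h1, h2, h3, h4]
    obtain ⟨g', ⟨hg'pos, _⟩, hτeq⟩ := hc.2 g ⟨hgpos, hge⟩
    have := congrArg (fun f : V →ₗ[ℝ] ℝ => f v) hτeq
    simp only [LinearMap.add_apply, LinearMap.smul_apply, smul_eq_mul] at this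
    have h5 : 0 ≤ g' v := hg'pos v hv
    rw [hgv] at this
    linarith only [this, h5, hMv]
  exact ⟨⟨stepA, stepB⟩, ⟨fun h => stepC (stepA h), fun h => stepB (stepD h)⟩⟩
end

section
/- Let (V, e) be an order unit space with a central state τ. Then for each v ∈ V and each α ∈ ℝ, ‖v - τ(v)e‖ ≤ ‖v - αe‖; i.e., τ(v)e is a best approximation to v from ℝe. -/
/-- In an order unit space `(V, e)` with central state `τ`, `τ(v) e` is a best
approximation to `v` from `ℝ e`: `‖v - τ(v) e‖ ≤ ‖v - α e‖` for all `α`. -/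
theorem stmt16 {V : Type*} [NormedAddCommGroup V] [NormedSpace ℝ V] [PartialOrder V]
    [CovariantClass V V (· + ·) (· ≤ ·)]
    (e : V)
    (hsmulpos : ∀ (r : ℝ) (v : V), 0 ≤ r → 0 ≤ v → 0 ≤ r • v)
    (hArch : ∀ v : V, (∀ r : ℝ, 0 < r → 0 ≤ v + r • e) → 0 ≤ v)
    (hunit : ∀ v : V, ∃ r : ℝ, 0 < r ∧ v ≤ r • e)
    (hnorm : ∀ v : V, ‖v‖ = sInf {r : ℝ | 0 < r ∧ -(r • e) ≤ v ∧ v ≤ r • e})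
    (τ : V →ₗ[ℝ] ℝ) (hτpos : ∀ v : V, 0 ≤ v → 0 ≤ τ v) (hτe : τ e = 1)
    (hcentral : ∀ v : V, 0 ≤ v → v ≤ (2 * τ v) • e) :
    ∀ (v : V) (α : ℝ), ‖v - τ v • e‖ ≤ ‖v - α • e‖ := by
  -- e is nonnegative
  have he : (0:V) ≤ e := by
    obtain ⟨r, hr, hre⟩ := hunit 0
    have h1 : (0:V) ≤ r⁻¹ • (r • e) := hsmulpos _ _ (by positivity) hre
    rwa [smul_smul, inv_mul_cancel₀ hr.ne', one_smul] at h1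
  intro v α
  set x := v - τ v • e with hx
  have hτx : τ x = 0 := by simp [hx, map_sub, map_smul, hτe]
  -- key: for y with τ y = 0, if 0 ≤ y + c•e then y ≤ c•e
  have key : ∀ (y : V) (c : ℝ), τ y = 0 → 0 ≤ y + c • e → y ≤ c • e := by
    intro y c hτy hyc
    have h2 := hcentral _ hyc
    have hτc : τ (y + c • e) = c := by simp [map_add, map_smul, hτy, hτe]
    rw [hτc] at h2
    have h3 : y + c • e ≤ c • e + c • e := by
      calc y + c • e ≤ (2*c) • e := h2
        _ = c • e + c • e := by rw [two_mul, add_smul]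
    exact (add_le_add_iff_right (c • e)).mp h3
  have hτx' : τ (-x) = 0 := by simp [hτx]
  set β := τ v - α with hβ
  have hxeq : v - α • e = x + β • e := by
    simp only [hx, hβ, sub_smul]; abel
  rw [hnorm (v - τ v • e), hnorm (v - α • e)]
  have hbdd : BddBelow {r : ℝ | 0 < r ∧ -(r • e) ≤ v - τ v • e ∧ v - τ v • e ≤ r • e} :=
    ⟨0, fun r hr => hr.1.le⟩
  apply le_csInf
  · -- nonempty
    obtain ⟨r1, hr1, h1⟩ := hunit (v - α • e)
    obtain ⟨r2, hr2, h2⟩ := hunit (-(v - α • e))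
    refine ⟨r1 + r2, by positivity, ?_, ?_⟩
    · rw [neg_le]
      calc -(v - α • e) ≤ r2 • e := h2
        _ ≤ (r1 + r2) • e := by
            rw [add_smul]
            have h3 := hsmulpos r1 e hr1.le he
            calc r2 • e = 0 + r2 • e := by abel
              _ ≤ r1 • e + r2 • e := add_le_add_left h3 _
    · calc v - α • e ≤ r1 • e := h1
        _ ≤ (r1 + r2) • e := by
            rw [add_smul]
            have h3 := hsmulpos r2 e hr2.le he
            calc r1 • e = r1 • e + 0 := by abel
              _ ≤ r1 • e + r2 • e := add_le_add_right h3 _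
  · rintro r ⟨hr, h1, h2⟩
    rw [hxeq] at h1 h2
    -- Round 1 of centrality
    have A1 : (0:V) ≤ x + (r + β) • e := by
      have h := neg_le_iff_add_nonneg.mp h1
      rw [add_smul]
      calc (0:V) ≤ x + β • e + r • e := h
        _ = x + (r • e + β • e) := by abel
    have A2 : (0:V) ≤ -x + (r - β) • e := by
      have h := sub_nonneg.mpr h2
      rw [sub_smul]
      calc (0:V) ≤ r • e - (x + β • e) := h
        _ = -x + (r • e - β • e) := by abel
    have B1 : x ≤ (r + β) • e := key x _ hτx A1
    have B2 : -x ≤ (r - β) • e := key (-x) _ hτx' A2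
    -- Round 2 of centrality
    have C1 : x ≤ (r - β) • e := by
      apply key x _ hτx
      calc (0:V) = x + -x := by abel
        _ ≤ x + (r - β) • e := add_le_add_right B2 x
    have C2 : -x ≤ (r + β) • e := by
      apply key (-x) _ hτx'
      have h := sub_nonneg.mpr B1
      calc (0:V) ≤ (r + β) • e - x := h
        _ = -x + (r + β) • e := by abel
    -- combine: x ≤ r•e and -(r•e) ≤ x
    have hsub : ∀ c : ℝ, 0 ≤ c → (r - c) • e ≤ r • e := by
      intro c hc
      rw [sub_smul]
      exact sub_le_self _ (hsmulpos c e hc he)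
    have hub : x ≤ r • e := by
      rcases le_or_gt 0 β with hb | hb
      · exact C1.trans (hsub β hb)
      · have : (r + β) • e = (r - (-β)) • e := by ring_nf
        exact B1.trans (this ▸ hsub (-β) (by linarith))
    have hlb : -x ≤ r • e := by
      rcases le_or_gt 0 β with hb | hb
      · exact B2.trans (hsub β hb)
      · have : (r + β) • e = (r - (-β)) • e := by ring_nf
        exact C2.trans (this ▸ hsub (-β) (by linarith))
    exact csInf_le hbdd ⟨hr, neg_le.mp hlb, hub⟩
end

section
/- Let (V, e) be an order unit space with a central state τ. Then for each v ∈ V, ‖v‖ = ‖v - τ(v)e‖ + |τ(v)|. -/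
/-- In an order unit space `(V, e)` with central state `τ`,
`‖v‖ = ‖v - τ(v) e‖ + |τ(v)|` for every `v`. -/
theorem stmt17 {V : Type*} [NormedAddCommGroup V] [NormedSpace ℝ V] [PartialOrder V]
    [CovariantClass V V (· + ·) (· ≤ ·)]
    (e : V)
    (hsmulpos : ∀ (r : ℝ) (v : V), 0 ≤ r → 0 ≤ v → 0 ≤ r • v)
    (hArch : ∀ v : V, (∀ r : ℝ, 0 < r → 0 ≤ v + r • e) → 0 ≤ v)
    (hunit : ∀ v : V, ∃ r : ℝ, 0 < r ∧ v ≤ r • e)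
    (hnorm : ∀ v : V, ‖v‖ = sInf {r : ℝ | 0 < r ∧ -(r • e) ≤ v ∧ v ≤ r • e})
    (τ : V →ₗ[ℝ] ℝ) (hτpos : ∀ v : V, 0 ≤ v → 0 ≤ τ v) (hτe : τ e = 1)
    (hcentral : ∀ v : V, 0 ≤ v → v ≤ (2 * τ v) • e) :
    ∀ v : V, ‖v‖ = ‖v - τ v • e‖ + |τ v| := by
  have he0 : (0:V) ≤ e := by
    obtain ⟨r, hr, hre⟩ := hunit (-e)
    have h2 := add_le_add_left hre e
    rw [neg_add_cancel] at h2
    have h1 : (0:V) ≤ (r+1) • e := by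
      calc (0:V) ≤ r • e + e := h2
        _ = (r+1) • e := by module
    have h3 := hsmulpos (r+1)⁻¹ _ (by positivity) h1
    rwa [inv_smul_smul₀ (by positivity)] at h3
  have hs : ∀ a : ℝ, 0 ≤ a → (0:V) ≤ a • e := fun a ha => hsmulpos a e ha he0
  have hs' : ∀ a b : ℝ, a ≤ b → a • e ≤ b • e := by
    intro a b hab
    have h := hs (b - a) (by linarith)
    calc a • e = a • e + 0 := (add_zero _).symm
      _ ≤ a • e + (b - a) • e := add_le_add_right h _
      _ = b • e := by module
  have hnegmono : ∀ a b : V, a ≤ b → -b ≤ -a := by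
    intro a b hab
    have h := add_le_add_left hab (-a - b)
    calc -b = a + (-a - b) := by abel
      _ ≤ b + (-a - b) := h
      _ = -a := by abel
  have hneg : ∀ (w : V) (s : ℝ), 0 ≤ w + s • e → -(s • e) ≤ w := by
    intro w s h
    have h2 := add_le_add_right h (-(s • e))
    simpa using h2
  have hneg' : ∀ (w : V) (s : ℝ), -(s • e) ≤ w → 0 ≤ w + s • e := by
    intro w s h
    calc (0:V) = -(s • e) + s • e := by abel
      _ ≤ w + s • e := add_le_add_left h _
  have hne : ∀ w : V, {r : ℝ | 0 < r ∧ -(r • e) ≤ w ∧ w ≤ r • e}.Nonempty := by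
    intro w
    obtain ⟨r1, hr1, h1⟩ := hunit w
    obtain ⟨r2, hr2, h2⟩ := hunit (-w)
    refine ⟨r1 + r2, by linarith, ?_, h1.trans (hs' r1 (r1+r2) (by linarith))⟩
    exact neg_le.mp (h2.trans (hs' r2 (r1+r2) (by linarith)))
  have hbdd : ∀ w : V, BddBelow {r : ℝ | 0 < r ∧ -(r • e) ≤ w ∧ w ≤ r • e} :=
    fun w => ⟨0, fun r hr => hr.1.le⟩
  have hle : ∀ (w : V) (s : ℝ), 0 ≤ s → -(s • e) ≤ w → w ≤ s • e → ‖w‖ ≤ s := by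
    intro w s hs0 hl hu
    rw [hnorm]
    refine le_of_forall_pos_le_add ?_
    intro ε hε
    refine csInf_le (hbdd w) ⟨by linarith, ?_, hu.trans (hs' s (s+ε) (by linarith))⟩
    exact le_trans (hnegmono _ _ (hs' s (s+ε) (by linarith))) hl
  have hge : ∀ w : V, -(‖w‖ • e) ≤ w ∧ w ≤ ‖w‖ • e := by
    intro w
    have key : ∀ r : ℝ, 0 < r → (-( (‖w‖ + r) • e) ≤ w ∧ w ≤ (‖w‖ + r) • e) := by
      intro r hr
      have hlt : sInf {x : ℝ | 0 < x ∧ -(x • e) ≤ w ∧ w ≤ x • e} < ‖w‖ + r := by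
        rw [← hnorm]; linarith
      obtain ⟨x, hx, hxlt⟩ := exists_lt_of_csInf_lt (hne w) hlt
      refine ⟨le_trans (hnegmono _ _ (hs' x _ hxlt.le)) hx.2.1,
        hx.2.2.trans (hs' x _ hxlt.le)⟩
    constructor
    · apply hneg
      apply hArch
      intro r hr
      have h := (key r hr).1
      have h2 : (0:V) ≤ w + (‖w‖ + r) • e := hneg' _ _ h
      calc (0:V) ≤ w + (‖w‖ + r) • e := h2
        _ = (w + ‖w‖ • e) + r • e := by module
    · rw [← sub_nonneg]
      apply hArch
      intro r hr
      have h := (key r hr).2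
      have h2 : (0:V) ≤ (‖w‖ + r) • e - w := sub_nonneg.mpr h
      calc (0:V) ≤ (‖w‖ + r) • e - w := h2
        _ = (‖w‖ • e - w) + r • e := by module
  have hτsmul : ∀ a : ℝ, τ (a • e) = a := fun a => by
    rw [map_smul, hτe, smul_eq_mul, mul_one]
  intro v
  apply le_antisymm
  · -- easy direction
    apply hle v _ (by positivity)
    · apply hneg
      have h1 := (hge (v - τ v • e)).1
      have h1' : (0:V) ≤ (v - τ v • e) + ‖v - τ v • e‖ • e := hneg' _ _ h1
      have h2 : (0:V) ≤ (|τ v| + τ v) • e := hs _ (by linarith [neg_abs_le (τ v)])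
      calc (0:V) ≤ ((v - τ v • e) + ‖v - τ v • e‖ • e) + (|τ v| + τ v) • e :=
            add_nonneg h1' h2
        _ = v + (‖v - τ v • e‖ + |τ v|) • e := by module
    · rw [← sub_nonneg]
      have h1 := (hge (v - τ v • e)).2
      have h1' : (0:V) ≤ ‖v - τ v • e‖ • e - (v - τ v • e) := sub_nonneg.mpr h1
      have h2 : (0:V) ≤ (|τ v| - τ v) • e := hs _ (by linarith [le_abs_self (τ v)])
      calc (0:V) ≤ (‖v - τ v • e‖ • e - (v - τ v • e)) + (|τ v| - τ v) • e :=
            add_nonneg h1' h2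
        _ = (‖v - τ v • e‖ + |τ v|) • e - v := by module
  · rw [hnorm v]
    apply le_csInf (hne v)
    intro r hr
    obtain ⟨hr0, hrl, hru⟩ := hr
    have hu0 : (0:V) ≤ r • e - v := sub_nonneg.mpr hru
    have hl0 : (0:V) ≤ v + r • e := hneg' _ _ hrl
    have htle : τ v ≤ r := by
      have h := hτpos _ hu0
      rw [map_sub, hτsmul] at h; linarith
    have htge : -r ≤ τ v := by
      have h := hτpos _ hl0
      rw [map_add, hτsmul] at h; linarith
    have habs : |τ v| ≤ r := abs_le.mpr ⟨htge, htle⟩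
    have hkey : ‖v - τ v • e‖ ≤ r - |τ v| := by
      apply hle _ _ (by linarith)
      · apply hneg
        rcases le_or_gt 0 (τ v) with h | h
        · rw [abs_of_nonneg h]
          have hc := hcentral (r • e - v) hu0
          rw [map_sub, hτsmul] at hc
          have hc' : (0:V) ≤ (2 * (r - τ v)) • e - (r • e - v) := sub_nonneg.mpr hc
          calc (0:V) ≤ (2 * (r - τ v)) • e - (r • e - v) := hc'
            _ = (v - τ v • e) + (r - τ v) • e := by module
        · rw [abs_of_neg h]
          calc (0:V) ≤ v + r • e := hl0
            _ = (v - τ v • e) + (r - -τ v) • e := by module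
      · rw [← sub_nonneg]
        rcases le_or_gt 0 (τ v) with h | h
        · rw [abs_of_nonneg h]
          calc (0:V) ≤ r • e - v := hu0
            _ = (r - τ v) • e - (v - τ v • e) := by module
        · rw [abs_of_neg h]
          have hc := hcentral (v + r • e) hl0
          rw [map_add, hτsmul] at hc
          have hc' : (0:V) ≤ (2 * (τ v + r)) • e - (v + r • e) := sub_nonneg.mpr hc
          calc (0:V) ≤ (2 * (τ v + r)) • e - (v + r • e) := hc'
            _ = (r - -τ v) • e - (v - τ v • e) := by module
    linarith [abs_nonneg (τ v)]
end

section
/- Let (V, B) be a base normed space with centre b₀ of B and associated functional e, and let K = {u + b₀ : e(u) = 0, ‖u‖ = 1}. Then for each v ∈ V not in ℝb₀ there exist k ∈ K and α, β ∈ ℝ with v = αk + βk', where k' = 2b₀ - k; and this representation is unique up to swapping (k, α, β) with (k', β, α). -/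
/-- In a base normed space `(V, B)` with centre `b₀` of `B` and
`K = {u + b₀ : e(u) = 0, ‖u‖ = 1}`, every `v ∉ ℝ b₀` is `α k + β k'` with `k ∈ K`
and `k' = 2 b₀ - k`, uniquely up to swapping `(k, α, β)` with `(k', β, α)`. -/
theorem stmt18 {V : Type*} [NormedAddCommGroup V] [NormedSpace ℝ V]
    (C B : Set V) (e : V →ₗ[ℝ] ℝ)
    (hCadd : ∀ x ∈ C, ∀ y ∈ C, x + y ∈ C)
    (hCsmul : ∀ x ∈ C, ∀ r : ℝ, 0 ≤ r → r • x ∈ C)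
    (hBconv : Convex ℝ B)
    (hbase : ∀ x ∈ C, x ≠ 0 → ∃! p : ℝ × V, 0 < p.1 ∧ p.2 ∈ B ∧ x = p.1 • p.2)
    (he : ∀ v : V, v ∈ C ↔ e v = ‖v‖)
    (hB : B = {v | v ∈ C ∧ e v = 1})
    (hnorm : ∀ v : V, ‖v‖ = gauge (convexHull ℝ (B ∪ -B)) v)
    (b₀ : V) (hcentre : IsCentre B b₀) :
    ∀ v : V, (∀ r : ℝ, v ≠ r • b₀) →
      ∃ k ∈ {k : V | ∃ u : V, e u = 0 ∧ ‖u‖ = 1 ∧ k = u + b₀}, ∃ α β : ℝ,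
        v = α • k + β • ((2 : ℝ) • b₀ - k) ∧
        ∀ k₁ ∈ {k : V | ∃ u : V, e u = 0 ∧ ‖u‖ = 1 ∧ k = u + b₀}, ∀ lam mu : ℝ,
          v = lam • k₁ + mu • ((2 : ℝ) • b₀ - k₁) →
          (k₁ = k ∧ lam = α ∧ mu = β) ∨
          (k₁ = (2 : ℝ) • b₀ - k ∧ lam = β ∧ mu = α) := by

  intro v hv
  have hb0 : e b₀ = 1 := by
    have h1 := hcentre.1
    rw [hB] at h1
    exact h1.2
  set t := e v with ht
  set u := v - t • b₀ with hu
  have heu : e u = 0 := by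
    simp [hu, map_sub, map_smul, hb0]
    exact sub_eq_zero.mpr ht.symm
  have hune : u ≠ 0 := by
    intro h
    exact hv t (by rw [← sub_eq_zero]; exact h)
  set s := ‖u‖ with hs
  have hspos : 0 < s := norm_pos_iff.mpr hune
  have hsne : s ≠ 0 := hspos.ne'
  refine ⟨s⁻¹ • u + b₀, ⟨s⁻¹ • u, ?_, ?_, rfl⟩, (t + s) / 2, (t - s) / 2, ?_, ?_⟩
  · simp [map_smul, heu]
  · rw [norm_smul, Real.norm_eq_abs, abs_inv, abs_of_pos hspos, ← hs,
      inv_mul_cancel₀ hsne]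
  · have hveq : v = u + t • b₀ := by rw [hu]; abel
    rw [hveq]
    match_scalars <;> field_simp <;> ring
  · rintro k₁ ⟨u₁, heu₁, hnu₁, rfl⟩ lam mu hveq
    have hveq' : v = (lam - mu) • u₁ + (lam + mu) • b₀ := by
      rw [hveq]; module
    have hsum : lam + mu = t := by
      have := congrArg e hveq'
      simp [map_add, map_smul, heu₁, hb0, ← ht] at this
      linarith [this]
    have huval : u = (lam - mu) • u₁ := by
      rw [hu, hveq', hsum]; abel
    have habs : |lam - mu| = s := by
      rw [hs, huval, norm_smul, Real.norm_eq_abs, hnu₁, mul_one]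
    have hdne : lam - mu ≠ 0 := by
      intro h
      rw [h, abs_zero] at habs
      exact hsne habs.symm
    have hu₁val : u₁ = (lam - mu)⁻¹ • u := by
      rw [huval, smul_smul, inv_mul_cancel₀ hdne, one_smul]
    rcases abs_eq (le_of_lt hspos) |>.mp habs with hd | hd
    · left
      refine ⟨?_, by linarith, by linarith⟩
      rw [hu₁val, hd]
    · right
      refine ⟨?_, by linarith, by linarith⟩
      rw [hu₁val, hd]
      module
end
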